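/- Let d ≤ K, let x_1,…,x_K ∈ ℝ^d, let X ∈ ℝ^{d×K} be the matrix whose a-th column is x_a, and let p_1,…,p_{K−d} ∈ ℝ^K be orthonormal vectors each orthogonal to every row of X (i.e., X p_j = 0 for all j and p_jᵀ p_{j'} = 1 if j = j' and 0 otherwise). Define the augmented features x̃_a := [x_aᵀ, e_aᵀp_1, …, e_aᵀp_{K−d}]ᵀ ∈ ℝ^K, where e_a denotes the a-th standard basis vector of ℝ^K. Then every eigenvalue of ∑_{a=1}^K x̃_a x̃_aᵀ lies in the interval [ min{λ_min(∑_{a=1}^K x_a x_aᵀ), 1}, max{λ_max(∑_{a=1}^K x_a x_aᵀ), 1} ]. -/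

import Mathlib

open Finset Matrix

/-- **Eigenvalue bounds for the augmented Gram matrix** (Lemma E.5).
With observed features `x_a ∈ ℝ^d`, orthonormal vectors `p_1,…,p_{K−d} ∈ ℝ^K` orthogonal to
every row of the feature matrix `X` (whose `a`-th column is `x_a`), and augmented features
`x̃_a := [x_aᵀ, p_1(a), …, p_{K−d}(a)]ᵀ`, every eigenvalue of `∑_a x̃_a x̃_aᵀ` lies in
`[min{λ_min(∑_a x_a x_aᵀ), 1}, max{λ_max(∑_a x_a x_aᵀ), 1}]`. -/
theorem augmented_gram_eigenvalue_bounds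
    {d K : ℕ} (hdK : d ≤ K)
    (x : Fin K → (Fin d → ℝ))
    (p : Fin (K - d) → (Fin K → ℝ))
    (hXp : ∀ j, ∀ i : Fin d, ∑ a, x a i * p j a = 0)
    (horth : ∀ j j', ∑ a, p j a * p j' a = if j = j' then (1 : ℝ) else 0)
    (xt : Fin K → (Fin d ⊕ Fin (K - d) → ℝ))
    (hxt : ∀ a, xt a = Sum.elim (x a) fun j => p j a)
    (S : Matrix (Fin d) (Fin d) ℝ) (hS : S = ∑ a, Matrix.vecMulVec (x a) (x a))
    (hSh : S.IsHermitian) :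
    ∀ c ∈ spectrum ℝ (∑ a, Matrix.vecMulVec (xt a) (xt a)),
      c ∈ Set.Icc (min (⨅ i, hSh.eigenvalues i) 1) (max (⨆ i, hSh.eigenvalues i) 1) := by
  intro c hc
  -- the augmented Gram matrix is block diagonal
  have hM : (∑ a, Matrix.vecMulVec (xt a) (xt a)) =
      Matrix.fromBlocks S 0 0 1 := by
    ext i j
    simp only [Matrix.sum_apply, Matrix.vecMulVec_apply, hxt]
    rcases i with i | i <;> rcases j with j | j
    · simp [hS, Matrix.sum_apply, Matrix.vecMulVec_apply]
    · simpa using hXp j i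
    · simpa [mul_comm] using hXp i j
    · simpa [Matrix.one_apply, eq_comm] using horth i j
  rw [hM, spectrum.mem_iff] at hc
  have hdet : ((algebraMap ℝ (Matrix (Fin d ⊕ Fin (K - d)) (Fin d ⊕ Fin (K - d)) ℝ)) c -
      Matrix.fromBlocks S 0 0 1) =
      Matrix.fromBlocks ((algebraMap ℝ (Matrix (Fin d) (Fin d) ℝ)) c - S) 0 0
        (Matrix.diagonal fun _ => c - 1) := by
    ext i j
    rcases i with i | i <;> rcases j with j | j <;>
      simp only [Matrix.sub_apply, Matrix.algebraMap_matrix_apply, Matrix.fromBlocks_apply₁₁,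
        Matrix.fromBlocks_apply₁₂, Matrix.fromBlocks_apply₂₁, Matrix.fromBlocks_apply₂₂,
        Matrix.diagonal_apply, Matrix.one_apply, Matrix.zero_apply, Sum.inl.injEq, Sum.inr.injEq,
        reduceCtorEq, if_false, sub_zero, sub_self]
    · by_cases h : i = j <;> simp [h]
  rw [hdet, Matrix.isUnit_iff_isUnit_det, Matrix.det_fromBlocks_zero₂₁,
    Matrix.det_diagonal] at hc
  rw [Finset.prod_const, Finset.card_univ, Fintype.card_fin, isUnit_iff_ne_zero, not_not,
    mul_eq_zero] at hc
  rcases hc with hc | hc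
  · -- c is an eigenvalue of S
    have hcS : c ∈ spectrum ℝ S := by
      rw [spectrum.mem_iff, Matrix.isUnit_iff_isUnit_det, isUnit_iff_ne_zero, not_not]
      exact hc
    rw [hSh.spectrum_real_eq_range_eigenvalues] at hcS
    obtain ⟨i, rfl⟩ := hcS
    constructor
    · exact le_trans (min_le_left _ _) (ciInf_le (Set.Finite.bddBelow (Set.finite_range _)) i)
    · exact le_trans (le_ciSup (Set.Finite.bddAbove (Set.finite_range _)) i) (le_max_left _ _)
  · have hc1 : c = 1 := by
      have := (pow_eq_zero_iff' (M₀ := ℝ)).mp hc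
      linarith [this.1]
    subst hc1
    exact ⟨min_le_right _ _, le_max_right _ _⟩
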